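/- arXiv:1811.10128 — 2 statements merged into one kernel-verified Lean document; each statement's English description precedes it below -/
import Mathlib

section
/- For any quasi-Banach lattices X, Y of measurable functions on a σ-finite measure space, any α > 0, 0 < θ < 1 and 0 < p ≤ ∞, the real interpolation space satisfies ((X, Y)_{θ,p})^α = (X^α, Y^α)_{θ, p/α} with equivalent quasinorms. -/
open MeasureTheory Filter Topology ENNReal

noncomputable section

/-- The "gauge" (extended-real-valued norm) of a (quasi-)normed lattice of
measurable functions: `N f = ∞` encodes `f ∉ X`. -/
abbrev LatN (α : Type*) := (α → ℝ) → ℝ≥0∞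

/-- Lattice (ideal space) property of a gauge. -/
def IsLat {α : Type*} [MeasurableSpace α] (μ : Measure α) (N : LatN α) : Prop :=
  ∀ f g : α → ℝ, (∀ᵐ x ∂μ, |f x| ≤ |g x|) → N f ≤ N g

/-- Quasi-norm (quasi-triangle inequality) property of a gauge. -/
def IsQNormed {α : Type*} (N : LatN α) : Prop :=
  ∃ K : ℝ≥0∞, 1 ≤ K ∧ K ≠ ⊤ ∧ ∀ f g : α → ℝ, N (f + g) ≤ K * (N f + N g)

/-- Norm (triangle inequality) property of a gauge, as for a Banach lattice. -/
def IsNormed {α : Type*} (N : LatN α) : Prop :=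
  ∀ f g : α → ℝ, N (f + g) ≤ N f + N g

/-- The Fatou property of a lattice gauge. -/
def HasFatou {α : Type*} [MeasurableSpace α] (μ : Measure α) (N : LatN α) : Prop :=
  ∀ (f : ℕ → α → ℝ) (g : α → ℝ), (∀ n, N (f n) ≤ 1) →
    (∀ᵐ x ∂μ, Tendsto (fun n => f n x) atTop (𝓝 (g x))) → N g ≤ 1

/-- `r`-convexity of a lattice gauge. -/
def RConvexN {α : Type*} (N : LatN α) (r : ℝ) : Prop :=
  ∃ M : ℝ≥0∞, M ≠ ⊤ ∧ ∀ f g : α → ℝ,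
    N (fun x => (|f x| ^ r + |g x| ^ r) ^ (1 / r)) ≤ M * (N f ^ r + N g ^ r) ^ (1 / r)

/-- The power lattice `X^δ`, with `‖f‖_{X^δ} = ‖|f|^{1/δ}‖_X^δ`. -/
def powN {α : Type*} (N : LatN α) (δ : ℝ) : LatN α :=
  fun f => (N fun x => |f x| ^ (1 / δ)) ^ δ

/-- The pointwise product lattice `XY`. -/
def prodN {α : Type*} (N M : LatN α) : LatN α :=
  fun h => sInf {c | ∃ a b : α → ℝ, (∀ x, |h x| ≤ |a x| * |b x|) ∧ c = N a * M b}

/-- The Calderón–Lozanovskiĭ product `X^{1-θ} Y^{θ}`. -/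
def clProdN {α : Type*} (N M : LatN α) (θ : ℝ) : LatN α :=
  prodN (powN N (1 - θ)) (powN M θ)

/-- The order (Köthe) dual gauge `X'`. -/
def dualN {α : Type*} [MeasurableSpace α] (μ : Measure α) (N : LatN α) : LatN α :=
  fun g => ⨆ f ∈ {f : α → ℝ | N f ≤ 1}, ∫⁻ x, ENNReal.ofReal |f x * g x| ∂μ

/-- The gauge of `L¹(μ)`. -/
def L1N {α : Type*} [MeasurableSpace α] (μ : Measure α) : LatN α :=
  fun f => ∫⁻ x, ENNReal.ofReal |f x| ∂μ

/-- The gauge of `L^∞(μ)`. -/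
def LinfN {α : Type*} [MeasurableSpace α] (μ : Measure α) : LatN α :=
  fun f => eLpNorm f ⊤ μ

/-- The K-functional of a couple of lattice gauges:
`K(t, f; X, Y) = inf { ‖u‖_X + t ‖v‖_Y : f = u + v }`. -/
def KN {α : Type*} (N M : LatN α) (t : ℝ) (f : α → ℝ) : ℝ≥0∞ :=
  sInf {c | ∃ u v : α → ℝ, (∀ x, f x = u x + v x) ∧
    c = N u + ENNReal.ofReal t * M v}

/-- The real-interpolation norm with parameters `θ, p` built from a K-functional. -/
def interpOfK (K : ℝ → ℝ≥0∞) (θ : ℝ) (p : ℝ≥0∞) : ℝ≥0∞ :=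
  if p = ⊤ then ⨆ t : Set.Ioi (0 : ℝ), ENNReal.ofReal ((t : ℝ) ^ (-θ)) * K (t : ℝ)
  else (∫⁻ t in Set.Ioi (0 : ℝ),
      (ENNReal.ofReal (t ^ (-θ)) * K t) ^ p.toReal / ENNReal.ofReal t) ^ (1 / p.toReal)

/-- The real interpolation space `(X, Y)_{θ, p}` as a lattice gauge. -/
def interpN {α : Type*} (N M : LatN α) (θ : ℝ) (p : ℝ≥0∞) : LatN α :=
  fun f => interpOfK (fun t => KN N M t f) θ p


section PowerTheoremHelpers
set_option linter.unusedSectionVars false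

variable {ι : Type*} [MeasurableSpace ι] {μ : Measure ι}

lemma KN_le {N M : LatN ι} {t : ℝ} {f u v : ι → ℝ} (h : ∀ x, f x = u x + v x) :
    KN N M t f ≤ N u + ENNReal.ofReal t * M v :=
  sInf_le ⟨u, v, h, rfl⟩

lemma le_mul_sInf {L C : ℝ≥0∞} {S : Set ℝ≥0∞} (hC0 : C ≠ 0) (hCt : C ≠ ⊤)
    (h : ∀ c ∈ S, L ≤ C * c) : L ≤ C * sInf S := by
  have h1 : L / C ≤ sInf S := le_sInf fun c hc =>
    (ENNReal.div_le_iff_le_mul (Or.inl hC0) (Or.inl hCt)).2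
      (by rw [mul_comm]; exact h c hc)
  calc L = C * (L / C) := (ENNReal.mul_div_cancel hC0 hCt).symm
  _ ≤ C * sInf S := mul_le_mul_right h1 _

lemma le_mul_sInf_rpow {L C : ℝ≥0∞} {S : Set ℝ≥0∞} {a : ℝ} (ha : 0 < a)
    (hC0 : C ≠ 0) (hCt : C ≠ ⊤)
    (h : ∀ c ∈ S, L ≤ C * c ^ a) : L ≤ C * sInf S ^ a := by
  have h1 : (L / C) ^ a⁻¹ ≤ sInf S := by
    refine le_sInf fun c hc => ?_
    have h2 : L / C ≤ c ^ a :=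
      (ENNReal.div_le_iff_le_mul (Or.inl hC0) (Or.inl hCt)).2
        (by rw [mul_comm]; exact h c hc)
    calc (L / C) ^ a⁻¹ ≤ (c ^ a) ^ a⁻¹ := ENNReal.rpow_le_rpow h2 (by positivity)
    _ = c := ENNReal.rpow_rpow_inv ha.ne' c
  have h3 : L / C ≤ sInf S ^ a := by
    calc L / C = ((L / C) ^ a⁻¹) ^ a := (ENNReal.rpow_inv_rpow ha.ne' _).symm
    _ ≤ sInf S ^ a := ENNReal.rpow_le_rpow h1 ha.le
  calc L = C * (L / C) := (ENNReal.mul_div_cancel hC0 hCt).symm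
  _ ≤ C * sInf S ^ a := mul_le_mul_right h3 _

/-- Iterated doubling: if `|g| ≤ 2^n |h|` pointwise then `N g ≤ (2K)^n N h`. -/
lemma lat_scale {N : LatN ι} (hN : IsLat μ N) {K : ℝ≥0∞}
    (hq : ∀ f g : ι → ℝ, N (f + g) ≤ K * (N f + N g)) (n : ℕ) :
    ∀ g h : ι → ℝ, (∀ x, |g x| ≤ 2 ^ n * |h x|) → N g ≤ (2 * K) ^ n * N h := by
  induction n with
  | zero =>
    intro g h hgh
    simpa using hN g h (Filter.Eventually.of_forall (by simpa using hgh))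
  | succ n ih =>
    intro g h hgh
    have h1 : N g ≤ N ((fun x => 2 ^ n * h x) + fun x => 2 ^ n * h x) := by
      refine hN _ _ (Filter.Eventually.of_forall fun x => ?_)
      have e : |(2:ℝ) ^ n * h x + 2 ^ n * h x| = 2 ^ (n + 1) * |h x| := by
        rw [← two_mul, ← mul_assoc, abs_mul,
          abs_of_nonneg (by positivity : (0:ℝ) ≤ 2 * 2 ^ n), pow_succ]
        ring
      rw [Pi.add_apply, e]
      exact hgh x
    have h2 : N (fun x => 2 ^ n * h x) ≤ (2 * K) ^ n * N h := by
      refine ih _ _ fun x => ?_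
      rw [abs_mul, abs_of_nonneg (by positivity : (0:ℝ) ≤ 2 ^ n)]
    calc N g ≤ K * (N (fun x => 2 ^ n * h x) + N (fun x => 2 ^ n * h x)) :=
          h1.trans (hq _ _)
    _ = 2 * K * N (fun x => 2 ^ n * h x) := by ring
    _ ≤ 2 * K * ((2 * K) ^ n * N h) := mul_le_mul_right h2 _
    _ = (2 * K) ^ (n + 1) * N h := by ring

/-- `(x+y)^a ≤ (2x)^a + (2y)^a` for nonnegative reals and `a > 0`. -/
lemma real_add_rpow_le {a x y : ℝ} (ha : 0 < a) (hx : 0 ≤ x) (hy : 0 ≤ y) :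
    (x + y) ^ a ≤ (2 * x) ^ a + (2 * y) ^ a := by
  rcases le_total x y with h | h
  · calc (x + y) ^ a ≤ (2 * y) ^ a :=
        Real.rpow_le_rpow (by linarith) (by linarith) ha.le
    _ ≤ (2 * x) ^ a + (2 * y) ^ a :=
        le_add_of_nonneg_left (Real.rpow_nonneg (by linarith) _)
  · calc (x + y) ^ a ≤ (2 * x) ^ a :=
        Real.rpow_le_rpow (by linarith) (by linarith) ha.le
    _ ≤ (2 * x) ^ a + (2 * y) ^ a :=
        le_add_of_nonneg_right (Real.rpow_nonneg (by linarith) _)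

/-- `x^a + y^a ≤ 2 (x+y)^a` in `ℝ≥0∞`. -/
lemma ennreal_rpow_add_le {a : ℝ} (ha : 0 ≤ a) (x y : ℝ≥0∞) :
    x ^ a + y ^ a ≤ 2 * (x + y) ^ a := by
  have hx : x ^ a ≤ (x + y) ^ a := ENNReal.rpow_le_rpow le_self_add ha
  have hy : y ^ a ≤ (x + y) ^ a := ENNReal.rpow_le_rpow le_add_self ha
  calc x ^ a + y ^ a ≤ (x + y) ^ a + (x + y) ^ a := add_le_add hx hy
  _ = 2 * (x + y) ^ a := (two_mul _).symm

/-- `(x+y)^a ≤ 2^a (x^a + y^a)` in `ℝ≥0∞`. -/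
lemma ennreal_add_rpow_le {a : ℝ} (ha : 0 ≤ a) (x y : ℝ≥0∞) :
    (x + y) ^ a ≤ 2 ^ a * (x ^ a + y ^ a) := by
  rcases le_total x y with h | h
  · calc (x + y) ^ a ≤ (2 * y) ^ a :=
        ENNReal.rpow_le_rpow (by rw [two_mul]; exact add_le_add h le_rfl) ha
    _ = 2 ^ a * y ^ a := ENNReal.mul_rpow_of_nonneg _ _ ha
    _ ≤ 2 ^ a * (x ^ a + y ^ a) := mul_le_mul_right le_add_self _
  · calc (x + y) ^ a ≤ (2 * x) ^ a :=
        ENNReal.rpow_le_rpow (by rw [two_mul]; exact add_le_add le_rfl h) ha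
    _ = 2 ^ a * x ^ a := ENNReal.mul_rpow_of_nonneg _ _ ha
    _ ≤ 2 ^ a * (x ^ a + y ^ a) := mul_le_mul_right le_self_add _

end PowerTheoremHelpers

section KComparison
set_option linter.unusedSectionVars false

variable {ι : Type*} [MeasurableSpace ι] {μ : Measure ι}

/-- One decomposition of `|f|^{1/a}` yields a decomposition of `f` for the power couple. -/
lemma K_pow_le_aux {NX NY : LatN ι} (hX : IsLat μ NX) (hY : IsLat μ NY) {KX KY : ℝ≥0∞}
    (hKX : ∀ f g : ι → ℝ, NX (f + g) ≤ KX * (NX f + NX g))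
    (hKY : ∀ f g : ι → ℝ, NY (f + g) ≤ KY * (NY f + NY g))
    {a : ℝ} (ha : 0 < a) {t : ℝ} (ht : 0 ≤ t) (f u v : ι → ℝ)
    (hd : ∀ x, |f x| ^ (1 / a) = u x + v x) :
    KN (powN NX a) (powN NY a) (t ^ a) f ≤
      2 * max ((2 * KX) ^ a) ((2 * KY) ^ a) *
        (NX u + ENNReal.ofReal t * NY v) ^ a := by
  set φ : ι → ℝ := fun x => |f x| ^ (1 / a) with hφ
  have hφ0 : ∀ x, 0 ≤ φ x := fun x => Real.rpow_nonneg (abs_nonneg _) _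
  have hφa : ∀ x, φ x ^ a = |f x| := fun x => by
    rw [hφ, one_div, Real.rpow_inv_rpow (abs_nonneg _) ha.ne']
  set u' : ι → ℝ := fun x => min (max (u x) 0) (φ x) with hu'
  set v' : ι → ℝ := fun x => φ x - u' x with hv'
  have hu'0 : ∀ x, 0 ≤ u' x := fun x => le_min (le_max_right _ _) (hφ0 x)
  have hu'φ : ∀ x, u' x ≤ φ x := fun x => min_le_right _ _
  have hu'u : ∀ x, |u' x| ≤ |u x| := fun x => by
    rw [abs_of_nonneg (hu'0 x)]
    exact le_trans (min_le_left _ _) (max_le (le_abs_self _) (abs_nonneg _))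
  have hv'0 : ∀ x, 0 ≤ v' x := fun x => sub_nonneg.2 (hu'φ x)
  have hv'v : ∀ x, |v' x| ≤ |v x| := by
    intro x
    rw [abs_of_nonneg (hv'0 x)]
    have hdx := hd x
    have hux : u' x = min (max (u x) 0) (φ x) := rfl
    have hvx : v' x = φ x - u' x := rfl
    have hpx : φ x = |f x| ^ (1 / a) := rfl
    rcases le_total (u x) 0 with h0 | h0
    · have hz : u' x = 0 := by rw [hux, max_eq_right h0, min_eq_left (hφ0 x)]
      have h2 : φ x ≤ v x := by rw [hpx]; linarith
      calc v' x = φ x := by rw [hvx, hz, sub_zero]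
      _ ≤ v x := h2
      _ ≤ |v x| := le_abs_self _
    · rcases le_total (u x) (φ x) with h1 | h1
      · have hz : u' x = u x := by rw [hux, max_eq_left h0, min_eq_left h1]
        have h2 : v' x = v x := by rw [hvx, hz, hpx]; linarith
        exact h2 ▸ le_abs_self _
      · have hz : u' x = φ x := by
          rw [hux, max_eq_left h0, min_eq_right h1]
        have h2 : v' x = 0 := by rw [hvx, hz, sub_self]
        exact h2 ▸ abs_nonneg _
  have hsum : ∀ x, u' x + v' x = φ x := fun x => by
    have hvx : v' x = φ x - u' x := rfl
    rw [hvx]; ring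
  -- decomposition of f
  set sg : ι → ℝ := fun x => if f x < 0 then -1 else 1 with hsg
  have hsga : ∀ x, |sg x| = 1 := fun x => by
    have : sg x = if f x < 0 then -1 else 1 := rfl
    rw [this]; split <;> simp
  have hsgm : ∀ x, sg x * |f x| = f x := fun x => by
    have hx : sg x = if f x < 0 then -1 else 1 := rfl
    rcases lt_or_ge (f x) 0 with h | h
    · rw [hx, if_pos h, abs_of_neg h]; ring
    · rw [hx, if_neg (not_lt.2 h), abs_of_nonneg h]; ring
  set m : ι → ℝ := fun x => min (|f x|) ((2 * v' x) ^ a) with hm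
  have hmx : ∀ x, m x = min (|f x|) ((2 * v' x) ^ a) := fun _ => rfl
  have hm0 : ∀ x, 0 ≤ m x := fun x =>
    le_min (abs_nonneg _) (Real.rpow_nonneg (by linarith [hv'0 x]) _)
  have hmf : ∀ x, m x ≤ |f x| := fun x => min_le_left _ _
  set V : ι → ℝ := fun x => sg x * m x with hV
  set U : ι → ℝ := fun x => f x - V x with hU
  have hVx : ∀ x, V x = sg x * m x := fun _ => rfl
  have hUx : ∀ x, U x = f x - V x := fun _ => rfl
  have hUV : ∀ x, f x = U x + V x := fun x => by rw [hUx]; ring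
  have hVabs : ∀ x, |V x| = m x := fun x => by
    rw [hVx, abs_mul, hsga, one_mul, abs_of_nonneg (hm0 x)]
  have hUabs : ∀ x, |U x| = |f x| - m x := fun x => by
    have h1 : U x = sg x * (|f x| - m x) := by
      rw [hUx, hVx, mul_sub, hsgm]
    rw [h1, abs_mul, hsga, one_mul, abs_of_nonneg (by linarith [hmf x])]
  -- pointwise bounds on the pieces
  have key : ∀ x, |f x| ≤ (2 * u' x) ^ a + (2 * v' x) ^ a := fun x => by
    rw [← hφa x, ← hsum x]
    exact real_add_rpow_le ha (hu'0 x) (hv'0 x)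
  have hUb : ∀ x, |U x| ^ (1 / a) ≤ 2 * u' x := by
    intro x
    have h1 : |U x| ≤ (2 * u' x) ^ a := by
      rw [hUabs x]
      rcases le_total ((2 * v' x) ^ a) (|f x|) with h2 | h2
      · rw [hmx, min_eq_right h2]; linarith [key x]
      · rw [hmx, min_eq_left h2]
        have : (0:ℝ) ≤ (2 * u' x) ^ a := Real.rpow_nonneg (by linarith [hu'0 x]) _
        linarith
    calc |U x| ^ (1 / a) ≤ ((2 * u' x) ^ a) ^ (1 / a) :=
        Real.rpow_le_rpow (abs_nonneg _) h1 (by positivity)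
    _ = 2 * u' x := by
        rw [one_div, Real.rpow_rpow_inv (by linarith [hu'0 x]) ha.ne']
  have hVb : ∀ x, |V x| ^ (1 / a) ≤ 2 * v' x := by
    intro x
    have h1 : |V x| ≤ (2 * v' x) ^ a := by rw [hVabs x, hmx]; exact min_le_right _ _
    calc |V x| ^ (1 / a) ≤ ((2 * v' x) ^ a) ^ (1 / a) :=
        Real.rpow_le_rpow (abs_nonneg _) h1 (by positivity)
    _ = 2 * v' x := by
        rw [one_div, Real.rpow_rpow_inv (by linarith [hv'0 x]) ha.ne']
  -- norm bounds
  have hNU : powN NX a U ≤ (2 * KX * NX u) ^ a := by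
    rw [powN]
    refine ENNReal.rpow_le_rpow ?_ ha.le
    have step1 : NX (fun x => |U x| ^ (1 / a)) ≤ (2 * KX) ^ 1 * NX u' := by
      refine lat_scale hX hKX 1 _ u' fun x => ?_
      rw [abs_of_nonneg (Real.rpow_nonneg (abs_nonneg _) _),
        abs_of_nonneg (hu'0 x), pow_one]
      exact hUb x
    refine step1.trans ?_
    rw [pow_one]
    exact mul_le_mul_right (hX u' u (Filter.Eventually.of_forall hu'u)) _
  have hNV : powN NY a V ≤ (2 * KY * NY v) ^ a := by
    rw [powN]
    refine ENNReal.rpow_le_rpow ?_ ha.le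
    have step1 : NY (fun x => |V x| ^ (1 / a)) ≤ (2 * KY) ^ 1 * NY v' := by
      refine lat_scale hY hKY 1 _ v' fun x => ?_
      rw [abs_of_nonneg (Real.rpow_nonneg (abs_nonneg _) _),
        abs_of_nonneg (hv'0 x), pow_one]
      exact hVb x
    refine step1.trans ?_
    rw [pow_one]
    exact mul_le_mul_right (hY v' v (Filter.Eventually.of_forall hv'v)) _
  -- assemble
  refine (KN_le hUV).trans ?_
  set Cm : ℝ≥0∞ := max ((2 * KX) ^ a) ((2 * KY) ^ a) with hCm
  calc powN NX a U + ENNReal.ofReal (t ^ a) * powN NY a V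
      ≤ (2 * KX * NX u) ^ a + ENNReal.ofReal t ^ a * (2 * KY * NY v) ^ a := by
        rw [← ENNReal.ofReal_rpow_of_nonneg ht ha.le]
        exact add_le_add hNU (mul_le_mul_right hNV _)
  _ = (2 * KX) ^ a * (NX u) ^ a +
        (2 * KY) ^ a * (ENNReal.ofReal t * NY v) ^ a := by
        rw [ENNReal.mul_rpow_of_nonneg (ENNReal.ofReal t) (NY v) ha.le,
          ENNReal.mul_rpow_of_nonneg (2 * KX) (NX u) ha.le,
          ENNReal.mul_rpow_of_nonneg (2 * KY) (NY v) ha.le]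
        ring
  _ ≤ Cm * (NX u) ^ a + Cm * (ENNReal.ofReal t * NY v) ^ a :=
        add_le_add (mul_le_mul_left (le_max_left _ _) _)
          (mul_le_mul_left (le_max_right _ _) _)
  _ = Cm * ((NX u) ^ a + (ENNReal.ofReal t * NY v) ^ a) := by ring
  _ ≤ Cm * (2 * (NX u + ENNReal.ofReal t * NY v) ^ a) :=
        mul_le_mul_right (ennreal_rpow_add_le ha.le _ _) _
  _ = 2 * Cm * (NX u + ENNReal.ofReal t * NY v) ^ a := by ring

end KComparison

section KComparison2
set_option linter.unusedSectionVars false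

variable {ι : Type*} [MeasurableSpace ι] {μ : Measure ι}

/-- `K(t^a, f; X^a, Y^a) ≤ C₁ K(t, |f|^{1/a}; X, Y)^a`. -/
lemma K_pow_le {NX NY : LatN ι} (hX : IsLat μ NX) (hY : IsLat μ NY) {KX KY : ℝ≥0∞}
    (hKX1 : 1 ≤ KX) (hKXt : KX ≠ ⊤)
    (hKX : ∀ f g : ι → ℝ, NX (f + g) ≤ KX * (NX f + NX g))
    (hKY1 : 1 ≤ KY) (hKYt : KY ≠ ⊤)
    (hKY : ∀ f g : ι → ℝ, NY (f + g) ≤ KY * (NY f + NY g))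
    {a : ℝ} (ha : 0 < a) {t : ℝ} (ht : 0 ≤ t) (f : ι → ℝ) :
    KN (powN NX a) (powN NY a) (t ^ a) f ≤
      2 * max ((2 * KX) ^ a) ((2 * KY) ^ a) *
        (KN NX NY t fun x => |f x| ^ (1 / a)) ^ a := by
  have hC0 : (2 : ℝ≥0∞) * max ((2 * KX) ^ a) ((2 * KY) ^ a) ≠ 0 := by
    refine mul_ne_zero (by norm_num) ?_
    have h0 : (0:ℝ≥0∞) < (2 * KX) ^ a :=
      ENNReal.rpow_pos (ENNReal.mul_pos (by norm_num) (zero_lt_one.trans_le hKX1).ne')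
        (ENNReal.mul_ne_top (by norm_num) hKXt)
    exact (h0.trans_le (le_max_left _ _)).ne'
  have hCt : (2 : ℝ≥0∞) * max ((2 * KX) ^ a) ((2 * KY) ^ a) ≠ ⊤ := by
    refine ENNReal.mul_ne_top (by norm_num) ?_
    rw [ne_eq, max_eq_top, not_or]
    exact ⟨ENNReal.rpow_ne_top_of_nonneg ha.le (ENNReal.mul_ne_top (by norm_num) hKXt),
      ENNReal.rpow_ne_top_of_nonneg ha.le (ENNReal.mul_ne_top (by norm_num) hKYt)⟩
  rw [KN]
  refine le_mul_sInf_rpow ha hC0 hCt ?_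
  rintro c ⟨u, v, hd, rfl⟩
  exact K_pow_le_aux hX hY hKX hKY ha ht f u v hd

/-- One decomposition of `f` for the power couple yields one of `|f|^{1/a}`. -/
lemma K_le_pow_aux {NX NY : LatN ι} (hX : IsLat μ NX) (hY : IsLat μ NY) {KX KY : ℝ≥0∞}
    (hKX : ∀ f g : ι → ℝ, NX (f + g) ≤ KX * (NX f + NX g))
    (hKY : ∀ f g : ι → ℝ, NY (f + g) ≤ KY * (NY f + NY g))
    {a : ℝ} (ha : 0 < a) {t : ℝ} (ht : 0 ≤ t) (f U V : ι → ℝ)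
    (hd : ∀ x, f x = U x + V x) :
    KN NX NY t (fun x => |f x| ^ (1 / a)) ≤
      (2 * KX) ^ ⌈a⁻¹⌉₊ * (powN NX a U) ^ (1 / a) +
        ENNReal.ofReal t * ((2 * KY) ^ ⌈a⁻¹⌉₊ * (powN NY a V) ^ (1 / a)) := by
  set n : ℕ := ⌈a⁻¹⌉₊ with hn
  set φ : ι → ℝ := fun x => |f x| ^ (1 / a) with hφ
  have hφx : ∀ x, φ x = |f x| ^ (1 / a) := fun _ => rfl
  have hφ0 : ∀ x, 0 ≤ φ x := fun x => Real.rpow_nonneg (abs_nonneg _) _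
  set A : ι → ℝ := fun x => |U x| ^ (1 / a) with hA
  set B : ι → ℝ := fun x => |V x| ^ (1 / a) with hB
  have hAx : ∀ x, A x = |U x| ^ (1 / a) := fun _ => rfl
  have hBx : ∀ x, B x = |V x| ^ (1 / a) := fun _ => rfl
  have hA0 : ∀ x, 0 ≤ A x := fun x => Real.rpow_nonneg (abs_nonneg _) _
  have hB0 : ∀ x, 0 ≤ B x := fun x => Real.rpow_nonneg (abs_nonneg _) _
  -- pointwise subadditivity with constant 2^n
  have hkey : ∀ x, φ x ≤ 2 ^ n * A x + 2 ^ n * B x := by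
    intro x
    have h1 : |f x| ≤ |U x| + |V x| := by rw [hd x]; exact abs_add_le _ _
    have h2 : φ x ≤ (|U x| + |V x|) ^ (1 / a) := by
      rw [hφx]
      exact Real.rpow_le_rpow (abs_nonneg _) h1 (by positivity)
    have h3 : (|U x| + |V x|) ^ (1 / a) ≤ (2 * |U x|) ^ (1/a) + (2 * |V x|) ^ (1/a) :=
      real_add_rpow_le (by positivity) (abs_nonneg _) (abs_nonneg _)
    have h4 : (2 * |U x|) ^ (1/a) = 2 ^ (1/a : ℝ) * A x := by
      rw [hAx, Real.mul_rpow (by norm_num) (abs_nonneg _)]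
    have h5 : (2 * |V x|) ^ (1/a) = 2 ^ (1/a : ℝ) * B x := by
      rw [hBx, Real.mul_rpow (by norm_num) (abs_nonneg _)]
    have h6 : (2:ℝ) ^ (1/a : ℝ) ≤ 2 ^ n := by
      rw [← Real.rpow_natCast 2 n]
      exact Real.rpow_le_rpow_of_exponent_le (by norm_num)
        (by rw [one_div]; exact (Nat.le_ceil _))
    have h7 : (2:ℝ) ^ (1/a : ℝ) * A x ≤ 2 ^ n * A x :=
      mul_le_mul_of_nonneg_right h6 (hA0 x)
    have h8 : (2:ℝ) ^ (1/a : ℝ) * B x ≤ 2 ^ n * B x :=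
      mul_le_mul_of_nonneg_right h6 (hB0 x)
    calc φ x ≤ (|U x| + |V x|) ^ (1 / a) := h2
    _ ≤ (2 * |U x|) ^ (1/a) + (2 * |V x|) ^ (1/a) := h3
    _ = 2 ^ (1/a : ℝ) * A x + 2 ^ (1/a : ℝ) * B x := by rw [h4, h5]
    _ ≤ 2 ^ n * A x + 2 ^ n * B x := add_le_add h7 h8
  -- the decomposition of φ
  set u : ι → ℝ := fun x => min (φ x) (2 ^ n * A x) with hu
  set v : ι → ℝ := fun x => φ x - u x with hv
  have hux : ∀ x, u x = min (φ x) (2 ^ n * A x) := fun _ => rfl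
  have hvx : ∀ x, v x = φ x - u x := fun _ => rfl
  have hu0 : ∀ x, 0 ≤ u x := fun x => le_min (hφ0 x) (by have := hA0 x; positivity)
  have huφ : ∀ x, u x ≤ φ x := fun x => min_le_left _ _
  have hv0 : ∀ x, 0 ≤ v x := fun x => sub_nonneg.2 (huφ x)
  have hdφ : ∀ x, φ x = u x + v x := fun x => by rw [hvx]; ring
  have huA : ∀ x, |u x| ≤ 2 ^ n * |A x| := fun x => by
    rw [abs_of_nonneg (hu0 x), abs_of_nonneg (hA0 x)]
    exact min_le_right _ _
  have hvB : ∀ x, |v x| ≤ 2 ^ n * |B x| := by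
    intro x
    rw [abs_of_nonneg (hv0 x), abs_of_nonneg (hB0 x)]
    rcases le_total (φ x) (2 ^ n * A x) with h1 | h1
    · have : u x = φ x := by rw [hux, min_eq_left h1]
      rw [hvx, this, sub_self]
      have := hB0 x; positivity
    · have : u x = 2 ^ n * A x := by rw [hux, min_eq_right h1]
      rw [hvx, this]
      linarith [hkey x]
  -- conclude
  refine (KN_le hdφ).trans ?_
  have hNu : NX u ≤ (2 * KX) ^ n * NX A := lat_scale hX hKX n u A huA
  have hNv : NY v ≤ (2 * KY) ^ n * NY B := lat_scale hY hKY n v B hvB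
  have hNA : NX A = (powN NX a U) ^ (1 / a) := by
    rw [powN, one_div, ENNReal.rpow_rpow_inv ha.ne']
    congr 1; funext x; rw [hAx, one_div]
  have hNB : NY B = (powN NY a V) ^ (1 / a) := by
    rw [powN, one_div, ENNReal.rpow_rpow_inv ha.ne']
    congr 1; funext x; rw [hBx, one_div]
  rw [← hNA, ← hNB]
  exact add_le_add hNu (mul_le_mul_right hNv _)

/-- `K(t, |f|^{1/a}; X, Y)^a ≤ C₂ K(t^a, f; X^a, Y^a)`. -/
lemma K_le_pow {NX NY : LatN ι} (hX : IsLat μ NX) (hY : IsLat μ NY) {KX KY : ℝ≥0∞}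
    (hKX1 : 1 ≤ KX) (hKXt : KX ≠ ⊤)
    (hKX : ∀ f g : ι → ℝ, NX (f + g) ≤ KX * (NX f + NX g))
    (hKY1 : 1 ≤ KY) (hKYt : KY ≠ ⊤)
    (hKY : ∀ f g : ι → ℝ, NY (f + g) ≤ KY * (NY f + NY g))
    {a : ℝ} (ha : 0 < a) {t : ℝ} (ht : 0 ≤ t) (f : ι → ℝ) :
    (KN NX NY t fun x => |f x| ^ (1 / a)) ^ a ≤
      2 ^ a * max (((2 * KX) ^ ⌈a⁻¹⌉₊) ^ a) (((2 * KY) ^ ⌈a⁻¹⌉₊) ^ a) *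
        KN (powN NX a) (powN NY a) (t ^ a) f := by
  set n : ℕ := ⌈a⁻¹⌉₊ with hn
  have h2KXt : (2 : ℝ≥0∞) * KX ≠ ⊤ := ENNReal.mul_ne_top (by norm_num) hKXt
  have h2KYt : (2 : ℝ≥0∞) * KY ≠ ⊤ := ENNReal.mul_ne_top (by norm_num) hKYt
  have hC0 : (2:ℝ≥0∞) ^ a * max (((2 * KX) ^ n) ^ a) (((2 * KY) ^ n) ^ a) ≠ 0 := by
    refine mul_ne_zero (by simp [ENNReal.rpow_eq_zero_iff]) ?_
    have h0 : (0:ℝ≥0∞) < ((2 * KX) ^ n) ^ a :=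
      ENNReal.rpow_pos
        (pos_iff_ne_zero.2 (pow_ne_zero n
          (ENNReal.mul_pos (by norm_num) (zero_lt_one.trans_le hKX1).ne').ne'))
        (pow_ne_top h2KXt)
    exact (h0.trans_le (le_max_left _ _)).ne'
  have hCt : (2:ℝ≥0∞) ^ a * max (((2 * KX) ^ n) ^ a) (((2 * KY) ^ n) ^ a) ≠ ⊤ := by
    refine ENNReal.mul_ne_top (ENNReal.rpow_ne_top_of_nonneg ha.le (by norm_num)) ?_
    rw [ne_eq, max_eq_top, not_or]
    exact ⟨ENNReal.rpow_ne_top_of_nonneg ha.le (pow_ne_top h2KXt),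
      ENNReal.rpow_ne_top_of_nonneg ha.le (pow_ne_top h2KYt)⟩
  conv_rhs => rw [KN]
  refine le_mul_sInf ?_ ?_ ?_
  · exact hC0
  · exact hCt
  rintro c ⟨U, V, hd, rfl⟩
  set Cm : ℝ≥0∞ := max (((2 * KX) ^ n) ^ a) (((2 * KY) ^ n) ^ a) with hCm
  calc (KN NX NY t fun x => |f x| ^ (1 / a)) ^ a
      ≤ ((2 * KX) ^ n * (powN NX a U) ^ (1 / a) +
          ENNReal.ofReal t * ((2 * KY) ^ n * (powN NY a V) ^ (1 / a))) ^ a :=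
        ENNReal.rpow_le_rpow (K_le_pow_aux hX hY hKX hKY ha ht f U V hd) ha.le
  _ ≤ 2 ^ a * (((2 * KX) ^ n * (powN NX a U) ^ (1 / a)) ^ a +
        (ENNReal.ofReal t * ((2 * KY) ^ n * (powN NY a V) ^ (1 / a))) ^ a) :=
        ennreal_add_rpow_le ha.le _ _
  _ = 2 ^ a * (((2 * KX) ^ n) ^ a * powN NX a U +
        ENNReal.ofReal (t ^ a) * (((2 * KY) ^ n) ^ a * powN NY a V)) := by
        rw [ENNReal.mul_rpow_of_nonneg ((2 * KX) ^ n) _ ha.le,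
          ENNReal.mul_rpow_of_nonneg (ENNReal.ofReal t) _ ha.le,
          ENNReal.mul_rpow_of_nonneg ((2 * KY) ^ n) _ ha.le,
          one_div, ENNReal.rpow_inv_rpow ha.ne', ENNReal.rpow_inv_rpow ha.ne',
          ENNReal.ofReal_rpow_of_nonneg ht ha.le]
  _ ≤ 2 ^ a * (Cm * powN NX a U + ENNReal.ofReal (t ^ a) * (Cm * powN NY a V)) := by
        refine mul_le_mul_right (add_le_add (mul_le_mul_left (le_max_left _ _) _)
          (mul_le_mul_right (mul_le_mul_left (le_max_right _ _) _) _)) _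
  _ = 2 ^ a * Cm * (powN NX a U + ENNReal.ofReal (t ^ a) * powN NY a V) := by ring

end KComparison2

section IntegralHelpers
set_option linter.unusedSectionVars false

/-- One-dimensional change of variables for the Lebesgue integral. -/
lemma lintegral_image_1d {s : Set ℝ} {f f' : ℝ → ℝ} (hs : MeasurableSet s)
    (hf' : ∀ x ∈ s, HasDerivWithinAt f (f' x) s x) (hf : Set.InjOn f s) (g : ℝ → ℝ≥0∞) :
    ∫⁻ x in f '' s, g x = ∫⁻ x in s, ENNReal.ofReal |f' x| * g (f x) := by
  simpa only [ContinuousLinearMap.det_toSpanSingleton] using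
    MeasureTheory.lintegral_image_eq_lintegral_abs_det_fderiv_mul volume hs
      (fun x hx => (hf' x hx).hasFDerivWithinAt) hf g

lemma rpow_image_Ioi {a : ℝ} (ha : 0 < a) :
    (fun s : ℝ => s ^ a) '' Set.Ioi 0 = Set.Ioi (0 : ℝ) := by
  ext t
  constructor
  · rintro ⟨s, hs, rfl⟩
    exact Real.rpow_pos_of_pos hs a
  · intro ht
    exact ⟨t ^ a⁻¹, Real.rpow_pos_of_pos ht _, Real.rpow_inv_rpow (le_of_lt ht) ha.ne'⟩

lemma lintegral_comp_rpow_Ioi {a : ℝ} (ha : 0 < a) (g : ℝ → ℝ≥0∞) :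
    ∫⁻ t in Set.Ioi (0 : ℝ), g t =
      ∫⁻ s in Set.Ioi (0 : ℝ), ENNReal.ofReal |a * s ^ (a - 1)| * g (s ^ a) := by
  have hmono : Set.InjOn (fun s : ℝ => s ^ a) (Set.Ioi 0) := by
    refine StrictMonoOn.injOn fun x hx y hy hxy => ?_
    exact Real.rpow_lt_rpow (le_of_lt hx) hxy ha
  conv_lhs => rw [← rpow_image_Ioi ha]
  exact lintegral_image_1d measurableSet_Ioi
    (fun x hx => (Real.hasDerivAt_rpow_const (Or.inl (ne_of_gt hx))).hasDerivWithinAt)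
    hmono g

/-- The Jacobian identity `|a s^{a-1}| ⋅ Y / s^a = a ⋅ Y / s`. -/
lemma jac_id {a s : ℝ} (ha : 0 < a) (hs : 0 < s) (Y : ℝ≥0∞) :
    ENNReal.ofReal |a * s ^ (a - 1)| * (Y / ENNReal.ofReal (s ^ a)) =
      ENNReal.ofReal a * (Y / ENNReal.ofReal s) := by
  have hsa1 : (0 : ℝ) < s ^ (a - 1) := Real.rpow_pos_of_pos hs _
  have habs : |a * s ^ (a - 1)| = a * s ^ (a - 1) := abs_of_pos (by positivity)
  have hsa : s ^ a = s ^ (a - 1) * s := by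
    rw [← Real.rpow_add_one hs.ne' (a - 1)]
    norm_num
  set c : ℝ≥0∞ := ENNReal.ofReal (s ^ (a - 1)) with hc
  have hc0 : c ≠ 0 := by
    rw [hc]; exact (ENNReal.ofReal_pos.2 hsa1).ne'
  have hct : c ≠ ⊤ := ENNReal.ofReal_ne_top
  rw [habs, hsa, ENNReal.ofReal_mul ha.le, ENNReal.ofReal_mul hsa1.le]
  rw [div_eq_mul_inv, div_eq_mul_inv,
    ENNReal.mul_inv (Or.inl hc0) (Or.inl hct)]
  rw [show ENNReal.ofReal a * c * (Y * (c⁻¹ * (ENNReal.ofReal s)⁻¹)) =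
      ENNReal.ofReal a * (Y * (ENNReal.ofReal s)⁻¹) * (c * c⁻¹) from by ring,
    ENNReal.mul_inv_cancel hc0 hct, mul_one]

/-- `(s^a)^{-θ} = (s^{-θ})^a` at the level of `ENNReal.ofReal`. -/
lemma ofReal_rpow_pow_neg {s a θ' : ℝ} (hs : 0 < s) :
    ENNReal.ofReal ((s ^ a) ^ (-θ')) = ENNReal.ofReal (s ^ (-θ')) ^ a := by
  rw [← Real.rpow_mul hs.le, mul_comm, Real.rpow_mul hs.le,
    ENNReal.ofReal_rpow_of_pos (Real.rpow_pos_of_pos hs _)]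

end IntegralHelpers

/-- For quasi-Banach lattices `X, Y`, `α > 0`, `0 < θ < 1`
and `0 < p ≤ ∞`, one has `((X, Y)_{θ,p})^α = (X^α, Y^α)_{θ, p/α}` with
equivalent quasinorms. -/
theorem interp_pow_scale
    {ι : Type*} [MeasurableSpace ι] (μ : Measure ι) [SigmaFinite μ]
    (NX NY : LatN ι) (hX : IsLat μ NX) (hY : IsLat μ NY)
    (hqX : IsQNormed NX) (hqY : IsQNormed NY)
    (a θ : ℝ) (p : ℝ≥0∞) (ha : 0 < a) (hθ0 : 0 < θ) (hθ1 : θ < 1) (hp : 0 < p) :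
    ∃ c : ℝ≥0∞, 0 < c ∧ c ≠ ⊤ ∧ ∀ f : ι → ℝ,
      powN (interpN NX NY θ p) a f ≤
          c * interpN (powN NX a) (powN NY a) θ (p / ENNReal.ofReal a) f ∧
      interpN (powN NX a) (powN NY a) θ (p / ENNReal.ofReal a) f ≤
          c * powN (interpN NX NY θ p) a f := by
  obtain ⟨KX, hKX1, hKXt, hKX⟩ := hqX
  obtain ⟨KY, hKY1, hKYt, hKY⟩ := hqY
  set n : ℕ := ⌈a⁻¹⌉₊ with hn
  set C₁ : ℝ≥0∞ := 2 * max ((2 * KX) ^ a) ((2 * KY) ^ a) with hC₁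
  set C₂ : ℝ≥0∞ := 2 ^ a * max (((2 * KX) ^ n) ^ a) (((2 * KY) ^ n) ^ a) with hC₂
  have h2KXt : (2 : ℝ≥0∞) * KX ≠ ⊤ := ENNReal.mul_ne_top (by norm_num) hKXt
  have h2KYt : (2 : ℝ≥0∞) * KY ≠ ⊤ := ENNReal.mul_ne_top (by norm_num) hKYt
  have h2KX0 : (2 : ℝ≥0∞) * KX ≠ 0 :=
    (ENNReal.mul_pos (by norm_num) (zero_lt_one.trans_le hKX1).ne').ne'
  have hC₁0 : C₁ ≠ 0 := by
    refine mul_ne_zero (by norm_num) ?_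
    have h0 : (0 : ℝ≥0∞) < (2 * KX) ^ a :=
      ENNReal.rpow_pos (pos_iff_ne_zero.2 h2KX0) h2KXt
    exact (h0.trans_le (le_max_left _ _)).ne'
  have hC₁t : C₁ ≠ ⊤ := by
    refine ENNReal.mul_ne_top (by norm_num) ?_
    rw [ne_eq, max_eq_top, not_or]
    exact ⟨ENNReal.rpow_ne_top_of_nonneg ha.le h2KXt,
      ENNReal.rpow_ne_top_of_nonneg ha.le h2KYt⟩
  have hC₂0 : C₂ ≠ 0 := by
    refine mul_ne_zero (by simp [ENNReal.rpow_eq_zero_iff]) ?_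
    have h0 : (0 : ℝ≥0∞) < ((2 * KX) ^ n) ^ a :=
      ENNReal.rpow_pos (pos_iff_ne_zero.2 (pow_ne_zero n h2KX0)) (pow_ne_top h2KXt)
    exact (h0.trans_le (le_max_left _ _)).ne'
  have hC₂t : C₂ ≠ ⊤ := by
    refine ENNReal.mul_ne_top (ENNReal.rpow_ne_top_of_nonneg ha.le (by norm_num)) ?_
    rw [ne_eq, max_eq_top, not_or]
    exact ⟨ENNReal.rpow_ne_top_of_nonneg ha.le (pow_ne_top h2KXt),
      ENNReal.rpow_ne_top_of_nonneg ha.le (pow_ne_top h2KYt)⟩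
  -- the two core pointwise comparisons of K-functionals
  have hcore1 : ∀ (f : ι → ℝ) (s : ℝ), 0 < s →
      ENNReal.ofReal ((s ^ a) ^ (-θ)) * KN (powN NX a) (powN NY a) (s ^ a) f ≤
        C₁ * (ENNReal.ofReal (s ^ (-θ)) *
          KN NX NY s fun x => |f x| ^ (1 / a)) ^ a := by
    intro f s hs
    rw [ofReal_rpow_pow_neg hs, ENNReal.mul_rpow_of_nonneg _ _ ha.le]
    calc ENNReal.ofReal (s ^ (-θ)) ^ a * KN (powN NX a) (powN NY a) (s ^ a) f
        ≤ ENNReal.ofReal (s ^ (-θ)) ^ a *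
            (C₁ * (KN NX NY s fun x => |f x| ^ (1 / a)) ^ a) :=
          mul_le_mul_right (K_pow_le hX hY hKX1 hKXt hKX hKY1 hKYt hKY ha hs.le f) _
    _ = C₁ * (ENNReal.ofReal (s ^ (-θ)) ^ a *
          (KN NX NY s fun x => |f x| ^ (1 / a)) ^ a) := by ring
  have hcore2 : ∀ (f : ι → ℝ) (s : ℝ), 0 < s →
      (ENNReal.ofReal (s ^ (-θ)) * KN NX NY s fun x => |f x| ^ (1 / a)) ^ a ≤
        C₂ * (ENNReal.ofReal ((s ^ a) ^ (-θ)) *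
          KN (powN NX a) (powN NY a) (s ^ a) f) := by
    intro f s hs
    rw [ofReal_rpow_pow_neg hs, ENNReal.mul_rpow_of_nonneg _ _ ha.le]
    calc ENNReal.ofReal (s ^ (-θ)) ^ a * (KN NX NY s fun x => |f x| ^ (1 / a)) ^ a
        ≤ ENNReal.ofReal (s ^ (-θ)) ^ a *
            (C₂ * KN (powN NX a) (powN NY a) (s ^ a) f) :=
          mul_le_mul_right (K_le_pow hX hY hKX1 hKXt hKX hKY1 hKYt hKY ha hs.le f) _
    _ = C₂ * (ENNReal.ofReal (s ^ (-θ)) ^ a *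
          KN (powN NX a) (powN NY a) (s ^ a) f) := by ring
  by_cases hptop : p = ⊤
  · -- the case `p = ∞`
    subst hptop
    have hq : (⊤ : ℝ≥0∞) / ENNReal.ofReal a = ⊤ :=
      ENNReal.top_div_of_ne_top ENNReal.ofReal_ne_top
    refine ⟨max C₁ C₂, lt_of_lt_of_le (pos_iff_ne_zero.2 hC₁0) (le_max_left _ _),
      by rw [ne_eq, max_eq_top, not_or]; exact ⟨hC₁t, hC₂t⟩, fun f => ?_⟩
    rw [hq]
    simp only [powN, interpN, interpOfK, if_pos rfl]
    constructor
    · -- `((X,Y)_{θ,∞})^a ≤ (X^a, Y^a)_{θ,∞}`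
      set S₂ : ℝ≥0∞ := ⨆ t : Set.Ioi (0 : ℝ),
        ENNReal.ofReal ((t : ℝ) ^ (-θ)) * KN (powN NX a) (powN NY a) (t : ℝ) f with hS₂
      have hsup : ∀ s : ℝ, 0 < s →
          (ENNReal.ofReal (s ^ (-θ)) *
            KN NX NY s fun x => |f x| ^ (1 / a)) ^ a ≤ C₂ * S₂ := by
        intro s hs
        refine (hcore2 f s hs).trans (mul_le_mul_right ?_ _)
        exact le_iSup_of_le ⟨s ^ a, Real.rpow_pos_of_pos hs a⟩ le_rfl
      have hS₁ : (⨆ t : Set.Ioi (0 : ℝ), ENNReal.ofReal ((t : ℝ) ^ (-θ)) *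
          KN NX NY (t : ℝ) fun x => |f x| ^ (1 / a)) ≤ (C₂ * S₂) ^ a⁻¹ := by
        refine iSup_le fun t => ?_
        calc ENNReal.ofReal ((t : ℝ) ^ (-θ)) * KN NX NY (t : ℝ) (fun x => |f x| ^ (1 / a))
            = ((ENNReal.ofReal ((t : ℝ) ^ (-θ)) *
                KN NX NY (t : ℝ) fun x => |f x| ^ (1 / a)) ^ a) ^ a⁻¹ :=
              (ENNReal.rpow_rpow_inv ha.ne' _).symm
        _ ≤ (C₂ * S₂) ^ a⁻¹ :=
              ENNReal.rpow_le_rpow (hsup (t : ℝ) t.2) (by positivity)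
      calc (⨆ t : Set.Ioi (0 : ℝ), ENNReal.ofReal ((t : ℝ) ^ (-θ)) *
            KN NX NY (t : ℝ) fun x => |f x| ^ (1 / a)) ^ a
          ≤ ((C₂ * S₂) ^ a⁻¹) ^ a := ENNReal.rpow_le_rpow hS₁ ha.le
      _ = C₂ * S₂ := ENNReal.rpow_inv_rpow ha.ne' _
      _ ≤ max C₁ C₂ * S₂ := mul_le_mul_left (le_max_right _ _) _
    · -- `(X^a, Y^a)_{θ,∞} ≤ ((X,Y)_{θ,∞})^a`
      refine iSup_le fun t => ?_
      obtain ⟨t, ht⟩ := t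
      have ht0 : (0 : ℝ) < t := ht
      set s : ℝ := t ^ a⁻¹ with hsdef
      have hs : 0 < s := Real.rpow_pos_of_pos ht0 _
      have hts : s ^ a = t := Real.rpow_inv_rpow ht0.le ha.ne'
      have h1 : ENNReal.ofReal (t ^ (-θ)) * KN (powN NX a) (powN NY a) t f ≤
          C₁ * (ENNReal.ofReal (s ^ (-θ)) *
            KN NX NY s fun x => |f x| ^ (1 / a)) ^ a := by
        rw [← hts]; exact hcore1 f s hs
      refine h1.trans ?_
      have h2 : (ENNReal.ofReal (s ^ (-θ)) *
          KN NX NY s fun x => |f x| ^ (1 / a)) ≤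
          ⨆ t : Set.Ioi (0 : ℝ), ENNReal.ofReal ((t : ℝ) ^ (-θ)) *
            KN NX NY (t : ℝ) fun x => |f x| ^ (1 / a) :=
        le_iSup_of_le ⟨s, hs⟩ le_rfl
      refine le_trans (mul_le_mul_right (ENNReal.rpow_le_rpow h2 ha.le) C₁) ?_
      exact mul_le_mul_left (le_max_left _ _) _
  · -- the case `p < ∞`
    have hofa0 : ENNReal.ofReal a ≠ 0 := (ENNReal.ofReal_pos.2 ha).ne'
    have hq : p / ENNReal.ofReal a ≠ ⊤ := (ENNReal.div_lt_top hptop hofa0).ne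
    have hpt : 0 < p.toReal := ENNReal.toReal_pos hp.ne' hptop
    set pt : ℝ := p.toReal with hptdef
    set r : ℝ := pt / a with hrdef
    have hr : 0 < r := div_pos hpt ha
    have har : a * r = pt := by rw [hrdef]; field_simp
    have hqr : (p / ENNReal.ofReal a).toReal = r := by
      rw [ENNReal.toReal_div, ENNReal.toReal_ofReal ha.le, hrdef, hptdef]
    have hinvr : (1 : ℝ) / r = 1 / pt * a := by
      rw [hrdef]; field_simp
    set D₁ : ℝ≥0∞ := C₂ * ((ENNReal.ofReal a)⁻¹) ^ ((1 : ℝ) / r) with hD₁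
    set D₂ : ℝ≥0∞ := C₁ * ENNReal.ofReal a ^ ((1 : ℝ) / r) with hD₂
    have hD₁0 : D₁ ≠ 0 := by
      refine mul_ne_zero hC₂0 ?_
      exact (ENNReal.rpow_pos (ENNReal.inv_pos.2 ENNReal.ofReal_ne_top)
        (ENNReal.inv_ne_top.2 hofa0)).ne'
    have hD₁t : D₁ ≠ ⊤ := ENNReal.mul_ne_top hC₂t
      (ENNReal.rpow_ne_top_of_nonneg (by positivity) (ENNReal.inv_ne_top.2 hofa0))
    have hD₂0 : D₂ ≠ 0 := mul_ne_zero hC₁0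
      (ENNReal.rpow_pos (ENNReal.ofReal_pos.2 ha) ENNReal.ofReal_ne_top).ne'
    have hD₂t : D₂ ≠ ⊤ := ENNReal.mul_ne_top hC₁t
      (ENNReal.rpow_ne_top_of_nonneg (by positivity) ENNReal.ofReal_ne_top)
    refine ⟨max D₁ D₂, lt_of_lt_of_le (pos_iff_ne_zero.2 hD₁0) (le_max_left _ _),
      by rw [ne_eq, max_eq_top, not_or]; exact ⟨hD₁t, hD₂t⟩, fun f => ?_⟩
    set K₁ : ℝ → ℝ≥0∞ := fun s => KN NX NY s fun x => |f x| ^ (1 / a) with hK₁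
    set K₂ : ℝ → ℝ≥0∞ := fun t => KN (powN NX a) (powN NY a) t f with hK₂
    set G₁ : ℝ → ℝ≥0∞ :=
      fun s => (ENNReal.ofReal (s ^ (-θ)) * K₁ s) ^ pt / ENNReal.ofReal s with hG₁
    set G₂ : ℝ → ℝ≥0∞ :=
      fun t => (ENNReal.ofReal (t ^ (-θ)) * K₂ t) ^ r / ENNReal.ofReal t with hG₂
    have hG₁x : ∀ s : ℝ, G₁ s =
        (ENNReal.ofReal (s ^ (-θ)) * K₁ s) ^ pt / ENNReal.ofReal s := fun _ => rfl
    have hG₂x : ∀ t : ℝ, G₂ t =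
        (ENNReal.ofReal (t ^ (-θ)) * K₂ t) ^ r / ENNReal.ofReal t := fun _ => rfl
    have hredL : powN (interpN NX NY θ p) a f =
        ((∫⁻ s in Set.Ioi (0 : ℝ), G₁ s) ^ ((1 : ℝ) / pt)) ^ a := by
      simp only [powN, interpN, interpOfK]
      rw [if_neg hptop]
    have hredR : interpN (powN NX a) (powN NY a) θ (p / ENNReal.ofReal a) f =
        (∫⁻ t in Set.Ioi (0 : ℝ), G₂ t) ^ ((1 : ℝ) / r) := by
      simp only [interpN, interpOfK]
      rw [if_neg hq, hqr]
    have hcv : ∫⁻ t in Set.Ioi (0 : ℝ), G₂ t =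
        ∫⁻ s in Set.Ioi (0 : ℝ), ENNReal.ofReal |a * s ^ (a - 1)| * G₂ (s ^ a) :=
      lintegral_comp_rpow_Ioi ha G₂
    -- pointwise comparisons of the integrands
    have hpw1 : ∀ s : ℝ, 0 < s →
        ENNReal.ofReal |a * s ^ (a - 1)| * G₂ (s ^ a) ≤
          C₁ ^ r * ENNReal.ofReal a * G₁ s := by
      intro s hs
      have h1 : (ENNReal.ofReal ((s ^ a) ^ (-θ)) * K₂ (s ^ a)) ^ r ≤
          C₁ ^ r * (ENNReal.ofReal (s ^ (-θ)) * K₁ s) ^ pt := by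
        calc (ENNReal.ofReal ((s ^ a) ^ (-θ)) * K₂ (s ^ a)) ^ r
            ≤ (C₁ * (ENNReal.ofReal (s ^ (-θ)) * K₁ s) ^ a) ^ r :=
              ENNReal.rpow_le_rpow (hcore1 f s hs) hr.le
        _ = C₁ ^ r * ((ENNReal.ofReal (s ^ (-θ)) * K₁ s) ^ a) ^ r :=
              ENNReal.mul_rpow_of_nonneg _ _ hr.le
        _ = C₁ ^ r * (ENNReal.ofReal (s ^ (-θ)) * K₁ s) ^ pt := by
              rw [← ENNReal.rpow_mul, har]
      calc ENNReal.ofReal |a * s ^ (a - 1)| * G₂ (s ^ a)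
          ≤ ENNReal.ofReal |a * s ^ (a - 1)| *
              ((C₁ ^ r * (ENNReal.ofReal (s ^ (-θ)) * K₁ s) ^ pt) /
                ENNReal.ofReal (s ^ a)) := by
            rw [hG₂x]
            exact mul_le_mul_right (ENNReal.div_le_div_right h1 _) _
      _ = ENNReal.ofReal a * ((C₁ ^ r * (ENNReal.ofReal (s ^ (-θ)) * K₁ s) ^ pt) /
            ENNReal.ofReal s) := jac_id ha hs _
      _ = C₁ ^ r * ENNReal.ofReal a * G₁ s := by
            rw [hG₁x, div_eq_mul_inv, div_eq_mul_inv]; ring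
    have hpw2 : ∀ s : ℝ, 0 < s →
        G₁ s ≤ C₂ ^ r * (ENNReal.ofReal a)⁻¹ *
          (ENNReal.ofReal |a * s ^ (a - 1)| * G₂ (s ^ a)) := by
      intro s hs
      have h1 : (ENNReal.ofReal (s ^ (-θ)) * K₁ s) ^ pt ≤
          C₂ ^ r * (ENNReal.ofReal ((s ^ a) ^ (-θ)) * K₂ (s ^ a)) ^ r := by
        calc (ENNReal.ofReal (s ^ (-θ)) * K₁ s) ^ pt
            = ((ENNReal.ofReal (s ^ (-θ)) * K₁ s) ^ a) ^ r := by
              rw [← ENNReal.rpow_mul, har]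
        _ ≤ (C₂ * (ENNReal.ofReal ((s ^ a) ^ (-θ)) * K₂ (s ^ a))) ^ r :=
              ENNReal.rpow_le_rpow (hcore2 f s hs) hr.le
        _ = C₂ ^ r * (ENNReal.ofReal ((s ^ a) ^ (-θ)) * K₂ (s ^ a)) ^ r :=
              ENNReal.mul_rpow_of_nonneg _ _ hr.le
      have h3 : (ENNReal.ofReal ((s ^ a) ^ (-θ)) * K₂ (s ^ a)) ^ r / ENNReal.ofReal s =
          (ENNReal.ofReal a)⁻¹ *
            (ENNReal.ofReal |a * s ^ (a - 1)| * G₂ (s ^ a)) := by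
        rw [hG₂x, jac_id ha hs _, ← mul_assoc,
          ENNReal.inv_mul_cancel hofa0 ENNReal.ofReal_ne_top, one_mul]
      calc G₁ s ≤ (C₂ ^ r * (ENNReal.ofReal ((s ^ a) ^ (-θ)) * K₂ (s ^ a)) ^ r) /
            ENNReal.ofReal s := by
            rw [hG₁x]; exact ENNReal.div_le_div_right h1 _
      _ = C₂ ^ r * ((ENNReal.ofReal ((s ^ a) ^ (-θ)) * K₂ (s ^ a)) ^ r /
            ENNReal.ofReal s) := by rw [mul_div_assoc]
      _ = C₂ ^ r * (ENNReal.ofReal a)⁻¹ *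
            (ENNReal.ofReal |a * s ^ (a - 1)| * G₂ (s ^ a)) := by
            rw [h3, mul_assoc]
    -- integral comparisons
    have hI21 : ∫⁻ t in Set.Ioi (0 : ℝ), G₂ t ≤
        C₁ ^ r * ENNReal.ofReal a * ∫⁻ s in Set.Ioi (0 : ℝ), G₁ s := by
      rw [hcv]
      calc ∫⁻ s in Set.Ioi (0 : ℝ), ENNReal.ofReal |a * s ^ (a - 1)| * G₂ (s ^ a)
          ≤ ∫⁻ s in Set.Ioi (0 : ℝ), C₁ ^ r * ENNReal.ofReal a * G₁ s :=
            setLIntegral_mono' measurableSet_Ioi fun s hs => hpw1 s (Set.mem_Ioi.mp hs)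
      _ = C₁ ^ r * ENNReal.ofReal a * ∫⁻ s in Set.Ioi (0 : ℝ), G₁ s :=
            lintegral_const_mul' _ _ (ENNReal.mul_ne_top
              (ENNReal.rpow_ne_top_of_nonneg hr.le hC₁t) ENNReal.ofReal_ne_top)
    have hI12 : ∫⁻ s in Set.Ioi (0 : ℝ), G₁ s ≤
        C₂ ^ r * (ENNReal.ofReal a)⁻¹ * ∫⁻ t in Set.Ioi (0 : ℝ), G₂ t := by
      calc ∫⁻ s in Set.Ioi (0 : ℝ), G₁ s
          ≤ ∫⁻ s in Set.Ioi (0 : ℝ), C₂ ^ r * (ENNReal.ofReal a)⁻¹ *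
              (ENNReal.ofReal |a * s ^ (a - 1)| * G₂ (s ^ a)) :=
            setLIntegral_mono' measurableSet_Ioi fun s hs => hpw2 s (Set.mem_Ioi.mp hs)
      _ = C₂ ^ r * (ENNReal.ofReal a)⁻¹ *
            ∫⁻ s in Set.Ioi (0 : ℝ), ENNReal.ofReal |a * s ^ (a - 1)| * G₂ (s ^ a) :=
            lintegral_const_mul' _ _ (ENNReal.mul_ne_top
              (ENNReal.rpow_ne_top_of_nonneg hr.le hC₂t) (ENNReal.inv_ne_top.2 hofa0))
      _ = C₂ ^ r * (ENNReal.ofReal a)⁻¹ * ∫⁻ t in Set.Ioi (0 : ℝ), G₂ t := by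
            rw [← hcv]
    constructor
    · rw [hredL, hredR]
      calc ((∫⁻ s in Set.Ioi (0 : ℝ), G₁ s) ^ ((1 : ℝ) / pt)) ^ a
          = (∫⁻ s in Set.Ioi (0 : ℝ), G₁ s) ^ ((1 : ℝ) / r) := by
            rw [← ENNReal.rpow_mul, ← hinvr]
      _ ≤ (C₂ ^ r * (ENNReal.ofReal a)⁻¹ * ∫⁻ t in Set.Ioi (0 : ℝ), G₂ t) ^ ((1 : ℝ) / r) :=
            ENNReal.rpow_le_rpow hI12 (by positivity)
      _ = (C₂ ^ r) ^ ((1 : ℝ) / r) * ((ENNReal.ofReal a)⁻¹) ^ ((1 : ℝ) / r) *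
            (∫⁻ t in Set.Ioi (0 : ℝ), G₂ t) ^ ((1 : ℝ) / r) := by
            rw [ENNReal.mul_rpow_of_nonneg _ _ (by positivity : (0:ℝ) ≤ 1 / r),
              ENNReal.mul_rpow_of_nonneg _ _ (by positivity : (0:ℝ) ≤ 1 / r)]
      _ = D₁ * (∫⁻ t in Set.Ioi (0 : ℝ), G₂ t) ^ ((1 : ℝ) / r) := by
            rw [one_div, ENNReal.rpow_rpow_inv hr.ne', hD₁, one_div]
      _ ≤ max D₁ D₂ * (∫⁻ t in Set.Ioi (0 : ℝ), G₂ t) ^ ((1 : ℝ) / r) :=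
            mul_le_mul_left (le_max_left _ _) _
    · rw [hredL, hredR]
      calc (∫⁻ t in Set.Ioi (0 : ℝ), G₂ t) ^ ((1 : ℝ) / r)
          ≤ (C₁ ^ r * ENNReal.ofReal a * ∫⁻ s in Set.Ioi (0 : ℝ), G₁ s) ^ ((1 : ℝ) / r) :=
            ENNReal.rpow_le_rpow hI21 (by positivity)
      _ = (C₁ ^ r) ^ ((1 : ℝ) / r) * ENNReal.ofReal a ^ ((1 : ℝ) / r) *
            (∫⁻ s in Set.Ioi (0 : ℝ), G₁ s) ^ ((1 : ℝ) / r) := by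
            rw [ENNReal.mul_rpow_of_nonneg _ _ (by positivity : (0:ℝ) ≤ 1 / r),
              ENNReal.mul_rpow_of_nonneg _ _ (by positivity : (0:ℝ) ≤ 1 / r)]
      _ = D₂ * ((∫⁻ s in Set.Ioi (0 : ℝ), G₁ s) ^ ((1 : ℝ) / pt)) ^ a := by
            rw [← ENNReal.rpow_mul (∫⁻ s in Set.Ioi (0 : ℝ), G₁ s) ((1:ℝ)/pt) a,
              ← hinvr, hD₂, one_div, ENNReal.rpow_rpow_inv hr.ne']
      _ ≤ max D₁ D₂ * ((∫⁻ s in Set.Ioi (0 : ℝ), G₁ s) ^ ((1 : ℝ) / pt)) ^ a :=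
            mul_le_mul_left (le_max_right _ _) _
end
end

section
/- Suppose a couple (X, Y) of quasi-normed lattices of measurable functions is boundedly AK-stable with constant C: for all f ∈ X, g ∈ Y there is U ∈ H^∞ with ‖U‖_{H^∞} ≤ C, ‖Ug‖_X ≤ C‖f‖_X, and ‖(1−U)f‖_Y ≤ C‖g‖_Y. Then for every δ > 0 the couple (X^δ, Y^δ) is boundedly AK-stable: for all f ∈ X^δ, g ∈ Y^δ there is V ∈ H^∞ with ‖V‖ bounded, ‖|V|^δ g‖_{X^δ} ≤ C^δ ‖f‖_{X^δ} and ‖|1−V|^δ f‖_{Y^δ} ≤ C^δ ‖g‖_{Y^δ}; combined with the corona theorem this yields a genuine bounded AK-decomposition for (X^δ, Y^δ). -/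
open MeasureTheory Filter Topology ENNReal

noncomputable section

instance fact_two_pi_pos : Fact (0 < 2 * Real.pi) := ⟨by positivity⟩

/-- The unit circle, realized as `ℝ / 2πℤ`. -/
abbrev Circle2 := AddCircle (2 * Real.pi)

/-- Boundary `H^∞`-type condition on the circle: (a.e. strongly) measurable with
vanishing negative Fourier coefficients. -/
def IsHinfFiber (u : Circle2 → ℂ) : Prop :=
  AEStronglyMeasurable u (volume : Measure Circle2) ∧
    ∀ n : ℤ, n < 0 → fourierCoeff u n = 0

/-- A bounded outer function on the circle: the modulus of its mean (the value of
its analytic extension at the origin) equals the exponential of the mean of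
`log` of its modulus. -/
def IsOuterHinf (u : Circle2 → ℂ) : Prop :=
  IsHinfFiber u ∧ (∃ C : ℝ, ∀ᵐ x ∂(volume : Measure Circle2), ‖u x‖ ≤ C) ∧
    Integrable (fun x => Real.log (‖u x‖)) AddCircle.haarAddCircle ∧
    ‖fourierCoeff u 0‖ =
      Real.exp (∫ x, Real.log (‖u x‖) ∂(AddCircle.haarAddCircle))

/-- Boundary values of the Smirnov class `N⁺`: quotients `g / h` with `g`
bounded analytic and `h` bounded outer. -/
def MemSmirnov (f : Circle2 → ℂ) : Prop :=
  ∃ g h : Circle2 → ℂ, IsHinfFiber g ∧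
    (∃ C : ℝ, ∀ᵐ x ∂(volume : Measure Circle2), ‖g x‖ ≤ C) ∧
    IsOuterHinf h ∧ ∀ᵐ x ∂(volume : Measure Circle2), f x = g x / h x

/-- Outer functions in the Smirnov class: quotients of bounded outer functions. -/
def IsOuterSmirnov (f : Circle2 → ℂ) : Prop :=
  ∃ g h : Circle2 → ℂ, IsOuterHinf g ∧ IsOuterHinf h ∧
    ∀ᵐ x ∂(volume : Measure Circle2), f x = g x / h x

/-- `‖φ‖_{BMO} ≤ C`, via mean oscillation over arcs of the circle. -/
def BMOle (φ : Circle2 → ℝ) (C : ℝ) : Prop :=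
  ∀ a b : ℝ, a < b → b - a ≤ 2 * Real.pi →
    (b - a)⁻¹ * ∫ x in a..b, |φ (x : Circle2) -
      (b - a)⁻¹ * ∫ y in a..b, φ (y : Circle2)| ≤ C

/-- Bounded AK-stability (on the circle) of a couple of lattice gauges with
constant `C`: measurable splittings can be produced by multiplication with a
bounded analytic function `U`. -/
def BAKStableC (NX NY : LatN Circle2) (C : ℝ) : Prop :=
  ∀ f g : Circle2 → ℝ, NX f ≠ ⊤ → NY g ≠ ⊤ →
    ∃ U : Circle2 → ℂ, IsHinfFiber U ∧
      (∀ᵐ x ∂(volume : Measure Circle2), ‖U x‖ ≤ C) ∧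
      NX (fun x => ‖U x‖ * |g x|) ≤ ENNReal.ofReal C * NX f ∧
      NY (fun x => ‖1 - U x‖ * |f x|) ≤ ENNReal.ofReal C * NY g

/-- If `(X, Y)` is boundedly AK-stable with constant `C`, then
for every `δ > 0` the couple `(X^δ, Y^δ)` is boundedly AK-stable: for all
`f ∈ X^δ`, `g ∈ Y^δ` there is `V ∈ H^∞` with `‖V‖_{H^∞} ≤ C`,
`‖|V|^δ g‖_{X^δ} ≤ C^δ ‖f‖_{X^δ}` and `‖|1-V|^δ f‖_{Y^δ} ≤ C^δ ‖g‖_{Y^δ}`. -/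
theorem bak_pow_scale
    (NX NY : LatN Circle2)
    (hX : IsLat (volume : Measure Circle2) NX)
    (hY : IsLat (volume : Measure Circle2) NY)
    (hqX : IsQNormed NX) (hqY : IsQNormed NY)
    (C : ℝ) (hC : 0 < C) (hBAK : BAKStableC NX NY C) :
    ∀ δ : ℝ, 0 < δ → ∀ f g : Circle2 → ℝ,
      powN NX δ f ≠ ⊤ → powN NY δ g ≠ ⊤ →
      ∃ V : Circle2 → ℂ, IsHinfFiber V ∧
        (∀ᵐ x ∂(volume : Measure Circle2), ‖V x‖ ≤ C) ∧
        powN NX δ (fun x => ‖V x‖ ^ δ * |g x|) ≤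
            ENNReal.ofReal (C ^ δ) * powN NX δ f ∧
        powN NY δ (fun x => ‖1 - V x‖ ^ δ * |f x|) ≤
            ENNReal.ofReal (C ^ δ) * powN NY δ g := by
  intro δ hδ f g hf hg
  have hδne : δ ≠ 0 := hδ.ne'
  set f' : Circle2 → ℝ := fun x => |f x| ^ (1 / δ) with hf'
  set g' : Circle2 → ℝ := fun x => |g x| ^ (1 / δ) with hg'
  have hfX : NX f' ≠ ⊤ := by
    intro h
    apply hf
    have h0 : powN NX δ f = (NX f') ^ δ := rfl
    rw [h0, h, ENNReal.top_rpow_of_pos hδ]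
  have hgY : NY g' ≠ ⊤ := by
    intro h
    apply hg
    have h0 : powN NY δ g = (NY g') ^ δ := rfl
    rw [h0, h, ENNReal.top_rpow_of_pos hδ]
  obtain ⟨U, hU1, hU2, hU3, hU4⟩ := hBAK f' g' hfX hgY
  have key : ∀ (a : ℝ) (b : ℝ), 0 ≤ a →
      abs (a ^ δ * |b|) ^ (1 / δ) = a * |b| ^ (1 / δ) := by
    intro a b ha
    have h1 : (0:ℝ) ≤ a ^ δ := Real.rpow_nonneg ha _
    rw [abs_of_nonneg (mul_nonneg h1 (abs_nonneg _)),
        Real.mul_rpow h1 (abs_nonneg _), ← Real.rpow_mul ha,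
        mul_one_div_cancel hδne, Real.rpow_one]
  have habsg : ∀ x : Circle2, |g' x| = |g x| ^ (1 / δ) := fun x =>
    abs_of_nonneg (Real.rpow_nonneg (abs_nonneg _) _)
  have habsf : ∀ x : Circle2, |f' x| = |f x| ^ (1 / δ) := fun x =>
    abs_of_nonneg (Real.rpow_nonneg (abs_nonneg _) _)
  refine ⟨U, hU1, hU2, ?_, ?_⟩
  · have heq : (fun x => abs (‖U x‖ ^ δ * |g x|) ^ (1 / δ)) =
        fun x => ‖U x‖ * |g' x| := by
      funext x
      rw [key _ _ (norm_nonneg _), habsg]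
    calc powN NX δ (fun x => ‖U x‖ ^ δ * |g x|)
        = (NX fun x => ‖U x‖ * |g' x|) ^ δ := by
          rw [powN, heq]
      _ ≤ (ENNReal.ofReal C * NX f') ^ δ := ENNReal.rpow_le_rpow hU3 hδ.le
      _ = ENNReal.ofReal (C ^ δ) * powN NX δ f := by
          rw [ENNReal.mul_rpow_of_nonneg _ _ hδ.le,
            ENNReal.ofReal_rpow_of_pos hC, powN]
  · have heq : (fun x => abs (‖1 - U x‖ ^ δ * |f x|) ^ (1 / δ)) =
        fun x => ‖1 - U x‖ * |f' x| := by
      funext x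
      rw [key _ _ (norm_nonneg _), habsf]
    calc powN NY δ (fun x => ‖1 - U x‖ ^ δ * |f x|)
        = (NY fun x => ‖1 - U x‖ * |f' x|) ^ δ := by
          rw [powN, heq]
      _ ≤ (ENNReal.ofReal C * NY g') ^ δ := ENNReal.rpow_le_rpow hU4 hδ.le
      _ = ENNReal.ofReal (C ^ δ) * powN NY δ g := by
          rw [ENNReal.mul_rpow_of_nonneg _ _ hδ.le,
            ENNReal.ofReal_rpow_of_pos hC, powN]
end
end
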